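/- For every n ≥ 4, the (2n+1)×(2n+1) block matrix [[8(n−2)/n, (2(n−2)/n)·𝟙ᵀ, (2(n−2)/n)·𝟙ᵀ],[(2(n−2)/n)·𝟙, I_n + ((n−4)/n)·J_n, I_n],[(2(n−2)/n)·𝟙, I_n, I_n + ((n−4)/n)·J_n]] is positive semidefinite, where 𝟙 ∈ ℝⁿ is the all-ones vector, I_n the n×n identity matrix, and J_n the n×n all-ones matrix. -/

import Mathlib

open Matrix

/-- For every `n ≥ 4`, the `(2n+1)×(2n+1)` block matrix
`[[8(n−2)/n, (2(n−2)/n)𝟙ᵀ, (2(n−2)/n)𝟙ᵀ],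
  [(2(n−2)/n)𝟙, Iₙ + ((n−4)/n)Jₙ, Iₙ],
  [(2(n−2)/n)𝟙, Iₙ, Iₙ + ((n−4)/n)Jₙ]]`
is positive semidefinite. -/
theorem moment_matrix_for_identity_posSemidef
    (n : ℕ) (hn : 4 ≤ n) :
    Matrix.PosSemidef (Matrix.of (fun i j =>
        match i, j with
        | none, none => 8 * ((n : ℝ) - 2) / n
        | none, some _ => 2 * ((n : ℝ) - 2) / n
        | some _, none => 2 * ((n : ℝ) - 2) / n
        | some (Sum.inl i), some (Sum.inl j) =>
            (if i = j then (1 : ℝ) else 0) + ((n : ℝ) - 4) / n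
        | some (Sum.inr i), some (Sum.inr j) =>
            (if i = j then (1 : ℝ) else 0) + ((n : ℝ) - 4) / n
        | some (Sum.inl i), some (Sum.inr j) => if i = j then (1 : ℝ) else 0
        | some (Sum.inr i), some (Sum.inl j) => if i = j then (1 : ℝ) else 0) :
      Matrix (Option (Fin n ⊕ Fin n)) (Option (Fin n ⊕ Fin n)) ℝ) := by
  open Finset in
  rw [Matrix.posSemidef_iff_dotProduct_mulVec]
  constructor
  · ext i j
    rcases i with _ | (i | i) <;> rcases j with _ | (j | j) <;>
      simp [Matrix.conjTranspose_apply, eq_comm]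
  · intro v
    have hn0 : (0:ℝ) < n := by
      have : 0 < n := by omega
      exact_mod_cast this
    have h4 : (4:ℝ) ≤ (n:ℝ) := by exact_mod_cast hn
    have hdub : ∀ (f g : Fin n → ℝ) (c : ℝ),
        ∑ x : Fin n, ∑ y : Fin n, f x * (c * g y) = c * ((∑ x, f x) * (∑ y, g y)) := by
      intro f g c
      simp only [← Finset.mul_sum, ← Finset.sum_mul]
      ring
    have hsingle : ∀ (f : Fin n → ℝ) (c : ℝ),
        ∑ x : Fin n, f x * c = (∑ x, f x) * c := by
      intro f c; rw [Finset.sum_mul]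
    simp only [star_trivial, dotProduct, mulVec, Matrix.of_apply, Fintype.sum_option,
      Fintype.sum_sum_type, add_mul, ite_mul, one_mul, zero_mul, mul_add,
      Finset.sum_add_distrib, mul_ite, mul_zero, mul_one,
      Finset.sum_ite_eq, Finset.sum_ite_eq', Finset.mem_univ, if_true,
      hdub, hsingle, ← Finset.mul_sum]
    set a := v none with ha
    set S1 := ∑ i : Fin n, v (some (Sum.inl i)) with hS1
    set S2 := ∑ i : Fin n, v (some (Sum.inr i)) with hS2
    set Qf := ∑ x : Fin n, v (some (Sum.inl x)) * v (some (Sum.inl x)) with hQf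
    set Qg := ∑ x : Fin n, v (some (Sum.inr x)) * v (some (Sum.inr x)) with hQg
    set P := ∑ x : Fin n, v (some (Sum.inl x)) * v (some (Sum.inr x)) with hP
    set P' := ∑ x : Fin n, v (some (Sum.inr x)) * v (some (Sum.inl x)) with hP'
    have cs : (S1 + S2)^2 ≤ (n:ℝ) * ∑ i : Fin n, (v (some (Sum.inl i)) + v (some (Sum.inr i)))^2 := by
      have h := sq_sum_le_card_mul_sum_sq (s := (univ : Finset (Fin n)))
        (f := fun i => v (some (Sum.inl i)) + v (some (Sum.inr i)))
      simp only [Finset.sum_add_distrib, card_univ, Fintype.card_fin] at h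
      exact_mod_cast h
    have expand : ∑ i : Fin n, (v (some (Sum.inl i)) + v (some (Sum.inr i)))^2
        = Qf + P + P' + Qg := by
      have h : ∀ i : Fin n, (v (some (Sum.inl i)) + v (some (Sum.inr i)))^2
          = v (some (Sum.inl i)) * v (some (Sum.inl i)) + v (some (Sum.inl i)) * v (some (Sum.inr i))
            + v (some (Sum.inr i)) * v (some (Sum.inl i)) + v (some (Sum.inr i)) * v (some (Sum.inr i)) :=
        fun i => by ring
      simp only [h, Finset.sum_add_distrib, hQf, hQg, hP, hP']
    rw [expand] at cs
    have hA : (S1 + S2)^2 / n ≤ Qf + P + P' + Qg := by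
      rw [div_le_iff₀ hn0]; linarith [cs]
    have key : a * (8 * ((n:ℝ) - 2) / n * a) + (S1 * (2 * ((n:ℝ) - 2) / n * a) + S2 * (2 * ((n:ℝ) - 2) / n * a)) +
        (a * (2 * ((n:ℝ) - 2) / n * S1) +
            (Qf + S1 * (((n:ℝ) - 4) / n * S1) + P') +
          (a * (2 * ((n:ℝ) - 2) / n * S2) +
            (P + (Qg + S2 * (((n:ℝ) - 4) / n * S2)))))
        = ((Qf + P + P' + Qg) - (S1 + S2)^2 / n)
          + (((n:ℝ) - 4) / (2*n)) * (S1 - S2)^2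
          + (((n:ℝ) - 2) / (2*n)) * (4*a + S1 + S2)^2 := by
      field_simp
      ring
    have hT2 : 0 ≤ (((n:ℝ) - 4) / (2*n)) * (S1 - S2)^2 :=
      mul_nonneg (div_nonneg (by linarith) (by linarith)) (sq_nonneg _)
    have hT3 : 0 ≤ (((n:ℝ) - 2) / (2*n)) * (4*a + S1 + S2)^2 :=
      mul_nonneg (div_nonneg (by linarith) (by linarith)) (sq_nonneg _)
    rw [key]
    linarith [hA, hT2, hT3]
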